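/- Let n₁ and n₂ be unit vectors in ℝ³ with n₁·n₂ = 0, and for a vector v = (v_x, v_y, v_z) ∈ ℝ³ write v·σ⃗ for the 2×2 complex matrix v_x σ_x + v_y σ_y + v_z σ_z. Then for every 2×2 complex unitary matrix U with det U = 1 there exist real numbers α, β, γ such that U = exp(iα (n₁·σ⃗)) · exp(iβ (n₂·σ⃗)) · exp(iγ (n₁·σ⃗)), where exp denotes the matrix exponential. (Generalized Euler decomposition of SU(2) about two orthogonal axes.) -/

import Mathlib

open Matrix

noncomputable def pauliX : Matrix (Fin 2) (Fin 2) ℂ := !![0, 1; 1, 0]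
noncomputable def pauliY : Matrix (Fin 2) (Fin 2) ℂ := !![0, -Complex.I; Complex.I, 0]
noncomputable def pauliZ : Matrix (Fin 2) (Fin 2) ℂ := !![1, 0; 0, -1]

/-- For `v ∈ ℝ³`, the matrix `v·σ⃗ = v_x σ_x + v_y σ_y + v_z σ_z`. -/
noncomputable def dotPauli (v : Fin 3 → ℝ) : Matrix (Fin 2) (Fin 2) ℂ :=
  (v 0 : ℂ) • pauliX + (v 1 : ℂ) • pauliY + (v 2 : ℂ) • pauliZ

/- ### Auxiliary lemmas -/

set_option linter.unusedTactic false
set_option linter.unreachableTactic false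
set_option maxHeartbeats 1000000

lemma exp_smul_of_sq_eq_one (M : Matrix (Fin 2) (Fin 2) ℂ) (hM : M * M = 1) (t : ℝ) :
    NormedSpace.exp ((Complex.I * (t:ℂ)) • M)
      = ((Real.cos t : ℂ)) • (1 : Matrix (Fin 2) (Fin 2) ℂ)
        + (Complex.I * (Real.sin t : ℂ)) • M := by
  have hM2 : M ^ 2 = 1 := by rw [sq]; exact hM
  have hfac : ∀ n : ℕ, ((n).factorial : ℂ) ≠ 0 := by
    intro n; exact_mod_cast Nat.factorial_ne_zero n
  have hI2 : (Complex.I * (t:ℂ)) ^ 2 = -((t:ℂ) ^ 2) := by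
    rw [mul_pow, Complex.I_sq]; ring
  rw [NormedSpace.exp_eq_tsum (𝕂 := ℂ)]
  refine HasSum.tsum_eq ?_
  refine HasSum.even_add_odd ?_ ?_
  · have h := (Complex.hasSum_cos (t:ℂ)).smul_const (1 : Matrix (Fin 2) (Fin 2) ℂ)
    rw [← Complex.ofReal_cos] at h
    convert h using 2 with k
    case e'_3 => rfl
    rw [smul_pow, pow_mul M, hM2, one_pow, smul_smul, pow_mul, hI2]
    congr 1
    rw [neg_pow, ← pow_mul]
    field_simp
  · have h := ((Complex.hasSum_sin (t:ℂ)).mul_left Complex.I).smul_const M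
    rw [← Complex.ofReal_sin] at h
    convert h using 2 with k
    case e'_3 => rfl
    rw [smul_pow, pow_succ M, pow_mul M, hM2, one_pow, one_mul, smul_smul,
      pow_succ, pow_mul, hI2]
    congr 1
    rw [neg_pow, ← pow_mul]
    field_simp
    ring

lemma key_triple (A B D : Matrix (Fin 2) (Fin 2) ℂ)
    (hA : A * A = 1) (hAB : A * B = Complex.I • D) (hBA : B * A = -(Complex.I • D))
    (ca sa cb sb cg sg : ℝ) :
    (((ca : ℝ) : ℂ) • (1 : Matrix (Fin 2) (Fin 2) ℂ) + (Complex.I * (sa:ℂ)) • A)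
      * (((cb : ℝ) : ℂ) • 1 + (Complex.I * (sb:ℂ)) • B)
      * (((cg : ℝ) : ℂ) • 1 + (Complex.I * (sg:ℂ)) • A)
    = ((ca*cb*cg - sa*cb*sg : ℝ) : ℂ) • 1
      + (Complex.I * ((sa*cb*cg + ca*cb*sg : ℝ) : ℂ)) • A
      + (Complex.I * ((ca*sb*cg + sa*sb*sg : ℝ) : ℂ)) • B
      + (Complex.I * ((ca*sb*sg - sa*sb*cg : ℝ) : ℂ)) • D := by
  have hABA : A * B * A = -B := by
    have h : A * B = -(B * A) := by rw [hAB, hBA, neg_neg]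
    rw [h, neg_mul, mul_assoc, hA, mul_one]
  simp only [add_mul, mul_add, smul_mul_assoc, mul_smul_comm, mul_one, one_mul, smul_smul]
  rw [hABA, hA, hAB, hBA]
  have h3 : (Complex.I) ^ 3 = -Complex.I := by rw [pow_succ, Complex.I_sq]; ring
  match_scalars
  all_goals push_cast
  all_goals ring_nf
  all_goals simp only [h3, Complex.I_sq]
  all_goals ring

lemma dotPauli_mul (u v : Fin 3 → ℝ) :
    dotPauli u * dotPauli v
      = ((u 0 * v 0 + u 1 * v 1 + u 2 * v 2 : ℝ) : ℂ) • 1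
        + Complex.I • dotPauli ![u 1 * v 2 - u 2 * v 1, u 2 * v 0 - u 0 * v 2,
            u 0 * v 1 - u 1 * v 0] := by
  ext i j
  fin_cases i <;> fin_cases j <;>
    simp [dotPauli, pauliX, pauliY, pauliZ, Matrix.mul_apply, Fin.sum_univ_two,
      Matrix.one_apply]
  all_goals push_cast
  all_goals ring_nf
  all_goals simp only [Complex.I_sq]
  all_goals ring

lemma dotPauli_anticomm (u v : Fin 3 → ℝ) :
    dotPauli u * dotPauli v + dotPauli v * dotPauli u
      = ((2 * (u 0 * v 0 + u 1 * v 1 + u 2 * v 2) : ℝ) : ℂ) • 1 := by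
  ext i j
  fin_cases i <;> fin_cases j <;>
    simp [dotPauli, pauliX, pauliY, pauliZ, Matrix.mul_apply, Fin.sum_univ_two,
      Matrix.one_apply]
  all_goals push_cast
  all_goals ring_nf
  all_goals simp only [Complex.I_sq]
  all_goals ring

lemma su2_decomp (U : Matrix (Fin 2) (Fin 2) ℂ)
    (hU : U ∈ Matrix.unitaryGroup (Fin 2) ℂ) (hdet : U.det = 1) :
    ∃ w : ℝ, ∃ m : Fin 3 → ℝ, w ^ 2 + (m 0) ^ 2 + (m 1) ^ 2 + (m 2) ^ 2 = 1 ∧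
      U = (w : ℂ) • 1 + Complex.I • dotPauli m := by
  have hinv : U⁻¹ = star U := Matrix.inv_eq_right_inv (Matrix.mem_unitaryGroup_iff.mp hU)
  have hadj : star U = U.adjugate := by
    rw [← hinv, Matrix.inv_def, hdet, Ring.inverse_one, one_smul]
  have h11 : U 1 1 = (starRingEnd ℂ) (U 0 0) := by
    have := congrFun (congrFun hadj 0) 0
    rw [Matrix.adjugate_fin_two] at this
    simpa [Matrix.star_apply] using this.symm
  have h10 : U 1 0 = -(starRingEnd ℂ) (U 0 1) := by
    have := congrFun (congrFun hadj 0) 1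
    rw [Matrix.adjugate_fin_two] at this
    simp [Matrix.star_apply] at this
    rw [← Complex.conj_conj (U 1 0), this, map_neg]
  have hnorm : (U 0 0).re ^ 2 + (U 0 0).im ^ 2 + (U 0 1).re ^ 2 + (U 0 1).im ^ 2 = 1 := by
    rw [Matrix.det_fin_two, h11, h10] at hdet
    have := congrArg Complex.re hdet
    simp [Complex.mul_re, Complex.conj_re, Complex.conj_im] at this
    nlinarith [this]
  refine ⟨(U 0 0).re, ![(U 0 1).im, (U 0 1).re, (U 0 0).im], by
    simpa using by nlinarith [hnorm], ?_⟩
  ext i j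
  fin_cases i <;> fin_cases j <;>
    simp [dotPauli, pauliX, pauliY, pauliZ, Matrix.one_apply, h11, h10, Complex.ext_iff] <;>
    ring

lemma ortho_expand (n₁ n₂ n₃ : Fin 3 → ℝ)
    (h1 : n₁ 0 ^ 2 + n₁ 1 ^ 2 + n₁ 2 ^ 2 = 1)
    (h2 : n₂ 0 ^ 2 + n₂ 1 ^ 2 + n₂ 2 ^ 2 = 1)
    (h3 : n₃ 0 ^ 2 + n₃ 1 ^ 2 + n₃ 2 ^ 2 = 1)
    (h12 : n₁ 0 * n₂ 0 + n₁ 1 * n₂ 1 + n₁ 2 * n₂ 2 = 0)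
    (h13 : n₁ 0 * n₃ 0 + n₁ 1 * n₃ 1 + n₁ 2 * n₃ 2 = 0)
    (h23 : n₂ 0 * n₃ 0 + n₂ 1 * n₃ 1 + n₂ 2 * n₃ 2 = 0)
    (m : Fin 3 → ℝ) (j : Fin 3) :
    m j = (m 0 * n₁ 0 + m 1 * n₁ 1 + m 2 * n₁ 2) * n₁ j
        + (m 0 * n₂ 0 + m 1 * n₂ 1 + m 2 * n₂ 2) * n₂ j
        + (m 0 * n₃ 0 + m 1 * n₃ 1 + m 2 * n₃ 2) * n₃ j := by
  set N : Matrix (Fin 3) (Fin 3) ℝ := Matrix.of ![n₁, n₂, n₃] with hN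
  have hNNT : N * Nᵀ = 1 := by
    ext i k
    fin_cases i <;> fin_cases k <;>
      simp [hN, Matrix.mul_apply, Matrix.transpose_apply, Fin.sum_univ_three,
        Matrix.one_apply, Matrix.vecHead, Matrix.vecTail] <;>
      linarith [h1, h2, h3, h12, h13, h23, sq_abs (0:ℝ)]
  have hNTN : Nᵀ * N = 1 := mul_eq_one_comm.mp hNNT
  have E : ∀ p q : Fin 3, n₁ p * n₁ q + n₂ p * n₂ q + n₃ p * n₃ q
      = if p = q then 1 else 0 := by
    intro p q
    have := congrFun (congrFun hNTN p) q
    simpa [hN, Matrix.mul_apply, Matrix.transpose_apply, Fin.sum_univ_three,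
      Matrix.one_apply, Matrix.vecHead, Matrix.vecTail] using this
  have E0 := E j 0; have E1 := E j 1; have E2 := E j 2
  fin_cases j <;> simp at E0 E1 E2 ⊢ <;>
    linear_combination (-(m 0) * E0) - m 1 * E1 - m 2 * E2

lemma exists_unit_circle (c s : ℝ) (h : c ^ 2 + s ^ 2 = 1) :
    ∃ θ : ℝ, Real.cos θ = c ∧ Real.sin θ = s := by
  have hc1 : -1 ≤ c := by nlinarith
  have hc2 : c ≤ 1 := by nlinarith
  have hs2 : 1 - c ^ 2 = s ^ 2 := by linarith
  rcases le_or_gt 0 s with hs | hs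
  · exact ⟨Real.arccos c, Real.cos_arccos hc1 hc2, by
      rw [Real.sin_arccos, hs2, Real.sqrt_sq hs]⟩
  · refine ⟨-Real.arccos c, by rw [Real.cos_neg]; exact Real.cos_arccos hc1 hc2, ?_⟩
    rw [Real.sin_neg, Real.sin_arccos, hs2, Real.sqrt_sq_eq_abs, abs_of_neg hs, neg_neg]

lemma exists_rot (r w x : ℝ) (hr : 0 ≤ r) (h : r ^ 2 = w ^ 2 + x ^ 2) :
    ∃ θ : ℝ, r * Real.cos θ = w ∧ r * Real.sin θ = x := by
  rcases eq_or_lt_of_le hr with h0 | h0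
  · have hw : w = 0 := by nlinarith
    have hx : x = 0 := by nlinarith
    exact ⟨0, by rw [hw, ← h0]; ring, by rw [hx, ← h0]; simp⟩
  · have h1 : (w / r) ^ 2 + (x / r) ^ 2 = 1 := by
      field_simp
      linarith [h]
    obtain ⟨θ, hc, hs⟩ := exists_unit_circle (w / r) (x / r) h1
    exact ⟨θ, by rw [hc]; field_simp, by rw [hs]; field_simp⟩

/-- Generalized Euler decomposition of SU(2) about two orthogonal axes. -/
theorem stmt10 (n₁ n₂ : Fin 3 → ℝ)
    (h1 : n₁ 0 ^ 2 + n₁ 1 ^ 2 + n₁ 2 ^ 2 = 1)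
    (h2 : n₂ 0 ^ 2 + n₂ 1 ^ 2 + n₂ 2 ^ 2 = 1)
    (horth : n₁ 0 * n₂ 0 + n₁ 1 * n₂ 1 + n₁ 2 * n₂ 2 = 0)
    (U : Matrix (Fin 2) (Fin 2) ℂ)
    (hU : U ∈ Matrix.unitaryGroup (Fin 2) ℂ) (hdet : U.det = 1) :
    ∃ α β γ : ℝ,
      U = NormedSpace.exp ((Complex.I * ↑α) • dotPauli n₁) *
          NormedSpace.exp ((Complex.I * ↑β) • dotPauli n₂) *
          NormedSpace.exp ((Complex.I * ↑γ) • dotPauli n₁) := by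
  classical
  set n₃ : Fin 3 → ℝ :=
    ![n₁ 1 * n₂ 2 - n₁ 2 * n₂ 1, n₁ 2 * n₂ 0 - n₁ 0 * n₂ 2, n₁ 0 * n₂ 1 - n₁ 1 * n₂ 0]
    with hn₃
  have e0 : n₃ 0 = n₁ 1 * n₂ 2 - n₁ 2 * n₂ 1 := rfl
  have e1 : n₃ 1 = n₁ 2 * n₂ 0 - n₁ 0 * n₂ 2 := rfl
  have e2 : n₃ 2 = n₁ 0 * n₂ 1 - n₁ 1 * n₂ 0 := rfl
  have h3 : n₃ 0 ^ 2 + n₃ 1 ^ 2 + n₃ 2 ^ 2 = 1 := by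
    rw [e0, e1, e2]
    linear_combination (n₂ 0 ^ 2 + n₂ 1 ^ 2 + n₂ 2 ^ 2) * h1 + h2
      - (n₁ 0 * n₂ 0 + n₁ 1 * n₂ 1 + n₁ 2 * n₂ 2) * horth
  have h13 : n₁ 0 * n₃ 0 + n₁ 1 * n₃ 1 + n₁ 2 * n₃ 2 = 0 := by
    rw [e0, e1, e2]; ring
  have h23 : n₂ 0 * n₃ 0 + n₂ 1 * n₃ 1 + n₂ 2 * n₃ 2 = 0 := by
    rw [e0, e1, e2]; ring
  set A := dotPauli n₁ with hA
  set B := dotPauli n₂ with hB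
  set D := dotPauli n₃ with hD
  have hz3 : dotPauli ![(0:ℝ), 0, 0] = 0 := by simp [dotPauli]
  have hA2 : A * A = 1 := by
    rw [hA, dotPauli_mul,
      show n₁ 0 * n₁ 0 + n₁ 1 * n₁ 1 + n₁ 2 * n₁ 2 = (1:ℝ) by linear_combination h1,
      show n₁ 1 * n₁ 2 - n₁ 2 * n₁ 1 = (0:ℝ) by ring,
      show n₁ 2 * n₁ 0 - n₁ 0 * n₁ 2 = (0:ℝ) by ring,
      show n₁ 0 * n₁ 1 - n₁ 1 * n₁ 0 = (0:ℝ) by ring, hz3]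
    simp
  have hB2 : B * B = 1 := by
    rw [hB, dotPauli_mul,
      show n₂ 0 * n₂ 0 + n₂ 1 * n₂ 1 + n₂ 2 * n₂ 2 = (1:ℝ) by linear_combination h2,
      show n₂ 1 * n₂ 2 - n₂ 2 * n₂ 1 = (0:ℝ) by ring,
      show n₂ 2 * n₂ 0 - n₂ 0 * n₂ 2 = (0:ℝ) by ring,
      show n₂ 0 * n₂ 1 - n₂ 1 * n₂ 0 = (0:ℝ) by ring, hz3]
    simp
  have hAB : A * B = Complex.I • D := by
    rw [hA, hB, dotPauli_mul, horth, hD, ← hn₃]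
    simp
  have hBA : B * A = -(Complex.I • D) := by
    have h := dotPauli_anticomm n₁ n₂
    rw [horth] at h
    simp only [mul_zero, Complex.ofReal_zero, zero_smul, ← hA, ← hB] at h
    have : B * A = -(A * B) := by
      have := eq_neg_of_add_eq_zero_right h
      exact this
    rw [this, hAB]
  obtain ⟨w, m, hwm, hUeq⟩ := su2_decomp U hU hdet
  have hm := fun j => ortho_expand n₁ n₂ n₃ h1 h2 h3 horth h13 h23 m j
  set x := m 0 * n₁ 0 + m 1 * n₁ 1 + m 2 * n₁ 2 with hx
  set y := m 0 * n₂ 0 + m 1 * n₂ 1 + m 2 * n₂ 2 with hy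
  set z := m 0 * n₃ 0 + m 1 * n₃ 1 + m 2 * n₃ 2 with hz
  have hDm : dotPauli m = (x:ℂ) • A + (y:ℂ) • B + (z:ℂ) • D := by
    rw [hA, hB, hD]
    simp only [dotPauli]
    rw [hm 0, hm 1, hm 2]
    push_cast
    module
  have hUexp : U = (w:ℂ) • 1 + (Complex.I * (x:ℂ)) • A + (Complex.I * (y:ℂ)) • B
      + (Complex.I * (z:ℂ)) • D := by
    rw [hUeq, hDm]
    module
  have hsum2 : w ^ 2 + x ^ 2 + y ^ 2 + z ^ 2 = 1 := by
    linear_combination hwm + x * hx + y * hy + z * hz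
      - m 0 * hm 0 - m 1 * hm 1 - m 2 * hm 2
  -- choose the angles
  have hyz : 0 ≤ y ^ 2 + z ^ 2 := by positivity
  set s2 := Real.sqrt (y ^ 2 + z ^ 2) with hs2def
  have hs2 : 0 ≤ s2 := Real.sqrt_nonneg _
  have hs2sq : s2 ^ 2 = y ^ 2 + z ^ 2 := Real.sq_sqrt hyz
  have hs2le : s2 ≤ 1 := by
    rw [hs2def]
    refine Real.sqrt_le_one.mpr ?_
    nlinarith [hsum2, sq_nonneg w, sq_nonneg x]
  set β := Real.arcsin s2 with hβ
  have hsinβ : Real.sin β = s2 := Real.sin_arcsin (by linarith) hs2le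
  have hcosβ : Real.cos β = Real.sqrt (1 - s2 ^ 2) := Real.cos_arcsin s2
  have hcosβ0 : 0 ≤ Real.cos β := by rw [hcosβ]; positivity
  have hcosβsq : (Real.cos β) ^ 2 = w ^ 2 + x ^ 2 := by
    rw [hcosβ, Real.sq_sqrt (by nlinarith [hsum2, hs2sq]), hs2sq]
    linarith [hsum2]
  obtain ⟨θ, hθ1, hθ2⟩ := exists_rot (Real.cos β) w x hcosβ0 hcosβsq
  obtain ⟨φ, hφ1, hφ2⟩ := exists_rot (Real.sin β) y (-z)
    (by rw [hsinβ]; exact hs2) (by rw [hsinβ, hs2sq]; ring)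
  refine ⟨(θ + φ) / 2, β, (θ - φ) / 2, ?_⟩
  set α := (θ + φ) / 2 with hα
  set γ := (θ - φ) / 2 with hγ
  have hθeq : θ = α + γ := by rw [hα, hγ]; ring
  have hφeq : φ = α - γ := by rw [hα, hγ]; ring
  have ew : w = Real.cos α * Real.cos β * Real.cos γ
      - Real.sin α * Real.cos β * Real.sin γ := by
    rw [← hθ1, hθeq, Real.cos_add]; ring
  have ex : x = Real.sin α * Real.cos β * Real.cos γ
      + Real.cos α * Real.cos β * Real.sin γ := by
    rw [← hθ2, hθeq, Real.sin_add]; ring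
  have ey : y = Real.cos α * Real.sin β * Real.cos γ
      + Real.sin α * Real.sin β * Real.sin γ := by
    rw [← hφ1, hφeq, Real.cos_sub]; ring
  have ez : z = Real.cos α * Real.sin β * Real.sin γ
      - Real.sin α * Real.sin β * Real.cos γ := by
    have : z = -(Real.sin β * Real.sin φ) := by rw [hφ2]; ring
    rw [this, hφeq, Real.sin_sub]; ring
  rw [exp_smul_of_sq_eq_one A hA2 α, exp_smul_of_sq_eq_one B hB2 β,
    exp_smul_of_sq_eq_one A hA2 γ,
    key_triple A B D hA2 hAB hBA (Real.cos α) (Real.sin α) (Real.cos β) (Real.sin β)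
      (Real.cos γ) (Real.sin γ), hUexp, ew, ex, ey, ez]
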